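/- Let F be a field and A an invertible n×n matrix over F whose elementary divisors are p₁,...,p_r, where p_j(λ) = λ^{d_j} + a_{j1}λ^{d_j−1} + ... + a_{jd_j} with a_{jd_j} ≠ 0. Then the elementary divisors of Adj(A) are q₁,...,q_r, where q_j(λ) = λ^{d_j} + Δ·(a_{jd_j−1}/a_{jd_j})λ^{d_j−1} + ... + Δ^{d_j−1}·(a_{j1}/a_{jd_j})λ + Δ^{d_j}/a_{jd_j}, and Δ = det(A). -/

import Mathlib

open Matrix Polynomial

/-- The companion matrix of the monic polynomial
`p(λ) = λ^d + a 1 * λ^(d-1) + ⋯ + a d` (with the convention `a 0 = 1`). -/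
def companionMatrix {F : Type*} [Field F] (d : ℕ) (a : ℕ → F) :
    Matrix (Fin d) (Fin d) F :=
  Matrix.of fun i j =>
    if (i : ℕ) = (j : ℕ) + 1 then 1
    else if (j : ℕ) = d - 1 then -a (d - (i : ℕ)) else 0


section Helpers

variable {F : Type*} [Field F]

def Tblk (d : ℕ) (Δ : F) : Matrix (Fin d) (Fin d) F :=
  Matrix.of fun i k => if (i : ℕ) + (k : ℕ) = d - 1 then Δ ^ (k : ℕ) else 0

lemma companion_mul_apply (d : ℕ) (hd : 0 < d) (a : ℕ → F)
    (M : Matrix (Fin d) (Fin d) F) (i k : Fin d) :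
    (companionMatrix d a * M) i k =
      (if h : 1 ≤ (i : ℕ) then M ⟨(i : ℕ) - 1, by omega⟩ k else 0)
        - a (d - (i : ℕ)) * M ⟨d - 1, by omega⟩ k := by
  rw [Matrix.mul_apply]
  rw [← Finset.add_sum_erase _ _ (Finset.mem_univ (⟨d - 1, by omega⟩ : Fin d))]
  have h1 : companionMatrix d a i ⟨d - 1, by omega⟩ = -a (d - (i : ℕ)) := by
    have : ¬ ((i : ℕ) = (d - 1) + 1) := by omega
    simp [companionMatrix, this]
  rw [h1]
  rw [add_comm, neg_mul, ← sub_eq_add_neg]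
  congr 1
  by_cases hi : 1 ≤ (i : ℕ)
  · rw [dif_pos hi]
    rw [Finset.sum_eq_single_of_mem (⟨(i : ℕ) - 1, by omega⟩ : Fin d) ?_ ?_]
    · have : (i : ℕ) = ((i : ℕ) - 1) + 1 := by omega
      simp [companionMatrix, ← this]
    · apply Finset.mem_erase.mpr
      constructor
      · intro h
        have := congrArg (Fin.val) h
        simp at this
        omega
      · exact Finset.mem_univ _
    · intro m hm hne
      have hm' : (m : ℕ) ≠ d - 1 := by
        intro h
        exact (Finset.mem_erase.mp hm).1 (Fin.ext h)
      have : ¬((i : ℕ) = (m : ℕ) + 1) := by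
        intro h
        apply hne
        apply Fin.ext
        simp [h]
      simp [companionMatrix, this, hm']
  · rw [dif_neg hi]
    apply Finset.sum_eq_zero
    intro m hm
    have hm' : (m : ℕ) ≠ d - 1 := by
      intro h
      exact (Finset.mem_erase.mp hm).1 (Fin.ext h)
    have : ¬((i : ℕ) = (m : ℕ) + 1) := by omega
    simp [companionMatrix, this, hm']

lemma mul_companion_apply_lt (d : ℕ) (b : ℕ → F) (M : Matrix (Fin d) (Fin d) F)
    (m k : Fin d) (hk : (k : ℕ) < d - 1) :
    (M * companionMatrix d b) m k = M m ⟨(k : ℕ) + 1, by omega⟩ := by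
  rw [Matrix.mul_apply]
  rw [Finset.sum_eq_single_of_mem (⟨(k : ℕ) + 1, by omega⟩ : Fin d) (Finset.mem_univ _) ?_]
  · simp [companionMatrix]
  · intro l _ hne
    have h1 : ¬((l : ℕ) = (k : ℕ) + 1) := fun h => hne (Fin.ext h)
    have h2 : ¬((k : ℕ) = d - 1) := by omega
    simp [companionMatrix, h1, h2]

lemma mul_companion_apply_last (d : ℕ) (hd : 0 < d) (b : ℕ → F)
    (M : Matrix (Fin d) (Fin d) F) (m k : Fin d) (hk : (k : ℕ) = d - 1) :
    (M * companionMatrix d b) m k = ∑ l, M m l * (-b (d - (l : ℕ))) := by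
  rw [Matrix.mul_apply]
  apply Finset.sum_congr rfl
  intro l _
  have hl := l.isLt
  have h1 : ¬((l : ℕ) = (k : ℕ) + 1) := by omega
  have h2 : ¬((l : ℕ) = d - 1 + 1) := by omega
  simp [companionMatrix, h1, h2, hk]

lemma Tblk_mul_companion_last (d : ℕ) (hd : 0 < d) (Δ : F) (b : ℕ → F)
    (m k : Fin d) (hk : (k : ℕ) = d - 1) :
    (Tblk d Δ * companionMatrix d b) m k = -(Δ ^ (d - 1 - (m : ℕ)) * b ((m : ℕ) + 1)) := by
  rw [mul_companion_apply_last d hd b _ m k hk]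
  rw [Finset.sum_eq_single_of_mem (⟨d - 1 - (m : ℕ), by omega⟩ : Fin d) (Finset.mem_univ _) ?_]
  · have h1 : (m : ℕ) + (d - 1 - (m : ℕ)) = d - 1 := by omega
    have h2 : d - (d - 1 - (m : ℕ)) = (m : ℕ) + 1 := by omega
    simp [Tblk, h1, h2, mul_neg]
  · intro l _ hne
    have h1 : ¬((m : ℕ) + (l : ℕ) = d - 1) := by
      intro h
      apply hne; apply Fin.ext; simp; omega
    simp [Tblk, h1]

lemma key_block (d : ℕ) (hd : 0 < d) (a : ℕ → F) (h0 : a 0 = 1) (had : a d ≠ 0) (Δ : F) :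
    companionMatrix d a * (Tblk d Δ * companionMatrix d (fun i => Δ ^ i * a (d - i) / a d))
      = Δ • Tblk d Δ := by
  ext i k
  have hi := i.isLt
  have hkk := k.isLt
  rw [companion_mul_apply d hd]
  by_cases hk : (k : ℕ) = d - 1
  · rw [Tblk_mul_companion_last d hd Δ _ _ k hk]
    have e1 : d - 1 - (d - 1) = 0 := by omega
    have e2 : d - 1 + 1 = d := by omega
    have e3 : d - d = 0 := by omega
    by_cases hi1 : 1 ≤ (i : ℕ)
    · rw [dif_pos hi1, Tblk_mul_companion_last d hd Δ _ _ k hk]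
      have e4 : d - 1 - ((i : ℕ) - 1) = d - (i : ℕ) := by omega
      have e5 : d - ((i : ℕ) - 1 + 1) = d - (i : ℕ) := by omega
      have e6 : ¬((i : ℕ) + (k : ℕ) = d - 1) := by omega
      simp only [e1, e2, e3, e4, e5, h0, pow_zero, Matrix.smul_apply, Tblk, Matrix.of_apply,
        e6, if_false, smul_zero]
      have e7 : Δ ^ (d - (i : ℕ)) * (Δ ^ ((i : ℕ) - 1 + 1) * a (d - (i : ℕ)) / a d)
          = Δ ^ d * a (d - (i : ℕ)) / a d := by
        rw [mul_div_assoc', ← mul_assoc, ← pow_add]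
        congr 3
        omega
      rw [e7]
      field_simp
      ring
    · rw [dif_neg hi1]
      have hi0 : (i : ℕ) = 0 := by omega
      simp only [e1, e2, e3, hi0, h0, pow_zero, Matrix.smul_apply, Tblk, Matrix.of_apply,
        zero_sub, mul_neg, neg_neg, one_mul, mul_one, Nat.sub_zero, smul_eq_mul]
      rw [if_pos (show 0 + (k : ℕ) = d - 1 by omega)]
      rw [mul_comm (a d), div_mul_cancel₀ _ had, ← pow_succ']
      congr 1
      omega
  · have hklt : (k : ℕ) < d - 1 := by omega
    have hTBlast : (Tblk d Δ * companionMatrix d (fun i => Δ ^ i * a (d - i) / a d))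
        ⟨d - 1, by omega⟩ k = 0 := by
      rw [mul_companion_apply_lt d _ _ _ k hklt]
      have : ¬(d - 1 + ((k : ℕ) + 1) = d - 1) := by omega
      simp [Tblk, this]
    rw [hTBlast, mul_zero, sub_zero]
    by_cases hi1 : 1 ≤ (i : ℕ)
    · rw [dif_pos hi1, mul_companion_apply_lt d _ _ _ k hklt]
      simp only [Tblk, Matrix.of_apply, Matrix.smul_apply, smul_eq_mul]
      by_cases hik : (i : ℕ) + (k : ℕ) = d - 1
      · have : (i : ℕ) - 1 + ((k : ℕ) + 1) = d - 1 := by omega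
        rw [if_pos this, if_pos hik, ← pow_succ']
      · have : ¬((i : ℕ) - 1 + ((k : ℕ) + 1) = d - 1) := by omega
        rw [if_neg this, if_neg hik, mul_zero]
    · rw [dif_neg hi1]
      have : ¬((i : ℕ) + (k : ℕ) = d - 1) := by omega
      simp [Tblk, this]


lemma sum_coeff_top (d : ℕ) (hd : 0 < d) (b : ℕ → F) (hb : b 0 = 1) :
    (∑ i ∈ Finset.range (d + 1), C (b i) * X ^ (d - i)).coeff d = 1 := by
  rw [finset_sum_coeff]
  rw [Finset.sum_eq_single_of_mem 0 (Finset.mem_range.mpr (by omega)) ?_]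
  · simp [hb]
  · intro i hi hne
    have : d - i ≠ d := by
      have := Finset.mem_range.mp hi; omega
    simp [coeff_C_mul, coeff_X_pow, Ne.symm this]

lemma sum_coeff_zero (d : ℕ) (hd : 0 < d) (b : ℕ → F) :
    (∑ i ∈ Finset.range (d + 1), C (b i) * X ^ (d - i)).coeff 0 = b d := by
  rw [finset_sum_coeff]
  rw [Finset.sum_eq_single_of_mem d (Finset.mem_range.mpr (by omega)) ?_]
  · simp
  · intro i hi hne
    have : d - i ≠ 0 := by
      have := Finset.mem_range.mp hi; omega
    simp only [coeff_C_mul, coeff_X_pow]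
    rw [if_neg (by omega), mul_zero]

lemma sum_natDegree (d : ℕ) (hd : 0 < d) (b : ℕ → F) (hb : b 0 = 1) :
    (∑ i ∈ Finset.range (d + 1), C (b i) * X ^ (d - i)).natDegree = d := by
  apply le_antisymm
  · apply natDegree_sum_le_of_forall_le
    intro i _
    exact (natDegree_C_mul_X_pow_le _ _).trans (by omega)
  · apply le_natDegree_of_ne_zero
    rw [sum_coeff_top d hd b hb]
    exact one_ne_zero

lemma sum_monic (d : ℕ) (hd : 0 < d) (b : ℕ → F) (hb : b 0 = 1) :
    (∑ i ∈ Finset.range (d + 1), C (b i) * X ^ (d - i)).Monic := by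
  rw [Monic, leadingCoeff, sum_natDegree d hd b hb, sum_coeff_top d hd b hb]

lemma reflect_sum {N : ℕ} {ι : Type*} (s : Finset ι) (f : ι → F[X]) :
    reflect N (∑ i ∈ s, f i) = ∑ i ∈ s, reflect N (f i) := by
  classical
  induction s using Finset.induction with
  | empty => simp
  | insert _ _ h ih => rw [Finset.sum_insert h, Finset.sum_insert h, reflect_add, ih]

lemma sum_reverse (d : ℕ) (hd : 0 < d) (b : ℕ → F) (hb : b 0 = 1) :
    (∑ i ∈ Finset.range (d + 1), C (b i) * X ^ (d - i)).reverse
      = ∑ i ∈ Finset.range (d + 1), C (b i) * X ^ i := by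
  rw [reverse, sum_natDegree d hd b hb, reflect_sum]
  apply Finset.sum_congr rfl
  intro i hi
  rw [reflect_C_mul_X_pow, revAt_le (by omega), Nat.sub_sub_self (by
    have := Finset.mem_range.mp hi; omega)]

lemma rev_rev (f : F[X]) (h0 : f.coeff 0 ≠ 0) : f.reverse.reverse = f := by
  have hT : f.natTrailingDegree = 0 := natTrailingDegree_eq_zero.mpr (Or.inr h0)
  have hd : f.reverse.natDegree = f.natDegree := by
    rw [reverse_natDegree, hT, Nat.sub_zero]
  ext n
  rw [coeff_reverse, hd, coeff_reverse, revAt_invol]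

lemma rev_pow (g : F[X]) (k : ℕ) : (g ^ k).reverse = g.reverse ^ k := by
  induction k with
  | zero => rw [pow_zero, pow_zero, ← C_1, reverse_C]
  | succ n ih => rw [pow_succ, pow_succ, reverse_mul_of_domain, ih]

lemma irr_rev (g : F[X]) (hg : Irreducible g) (h0 : g.coeff 0 ≠ 0) :
    Irreducible g.reverse := by
  have unit_of : ∀ s : F[X], s.coeff 0 ≠ 0 → IsUnit s.reverse → IsUnit s := by
    intro s hs hu
    have h1 : s.reverse.natDegree = 0 := natDegree_eq_zero_of_isUnit hu
    have hT : s.natTrailingDegree = 0 := natTrailingDegree_eq_zero.mpr (Or.inr hs)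
    have h2 : s.natDegree = 0 := by
      rw [reverse_natDegree, hT, Nat.sub_zero] at h1; exact h1
    rw [eq_C_of_natDegree_eq_zero h2]
    exact isUnit_C.mpr (isUnit_iff_ne_zero.mpr hs)
  constructor
  · intro hu
    exact hg.not_isUnit (unit_of g h0 hu)
  · intro s t hst
    have hrg : g.reverse.coeff 0 ≠ 0 := by
      rw [coeff_zero_reverse]
      exact leadingCoeff_ne_zero.mpr hg.ne_zero
    have hs0 : s.coeff 0 ≠ 0 := by
      intro h
      rw [hst, mul_coeff_zero, h, zero_mul] at hrg
      exact hrg rfl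
    have ht0 : t.coeff 0 ≠ 0 := by
      intro h
      rw [hst, mul_coeff_zero, h, mul_zero] at hrg
      exact hrg rfl
    have hg2 : g = s.reverse * t.reverse := by
      rw [← reverse_mul_of_domain, ← hst, rev_rev g h0]
    rcases hg.isUnit_or_isUnit hg2 with h | h
    · exact Or.inl (unit_of s hs0 h)
    · exact Or.inr (unit_of t ht0 h)

noncomputable def scaleEquiv (u : F) (hu : u ≠ 0) : F[X] ≃ₐ[F] F[X] :=
  AlgEquiv.ofAlgHom (aeval (C u * X)) (aeval (C u⁻¹ * X))
    (by
      apply algHom_ext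
      simp only [AlgHom.coe_comp, Function.comp_apply, aeval_X, _root_.map_mul, aeval_C,
        algebraMap_eq, AlgHom.coe_id, id_eq]
      rw [← mul_assoc, ← C_mul, inv_mul_cancel₀ hu, C_1, one_mul])
    (by
      apply algHom_ext
      simp only [AlgHom.coe_comp, Function.comp_apply, aeval_X, _root_.map_mul, aeval_C,
        algebraMap_eq, AlgHom.coe_id, id_eq]
      rw [← mul_assoc, ← C_mul, mul_inv_cancel₀ hu, C_1, one_mul])

lemma scaleEquiv_apply (u : F) (hu : u ≠ 0) (p : F[X]) :
    scaleEquiv u hu p = p.comp (C u * X) := by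
  show aeval (C u * X) p = _
  rw [aeval_def, algebraMap_eq]
  rfl

lemma irr_comp_scale (u : F) (hu : u ≠ 0) (h : F[X]) (hh : Irreducible h) :
    Irreducible (h.comp (C u * X)) := by
  rw [← scaleEquiv_apply u hu]
  exact hh.map (scaleEquiv u hu)

lemma poly_main (d : ℕ) (hd : 0 < d) (a : ℕ → F) (h0 : a 0 = 1) (had : a d ≠ 0)
    (Δ : F) (hΔ : Δ ≠ 0) (g : F[X]) (k : ℕ) (hg : Irreducible g)
    (hP : (∑ i ∈ Finset.range (d + 1), C (a i) * X ^ (d - i)) = g ^ k) :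
    ∃ (g' : F[X]) (k' : ℕ), Irreducible g' ∧
      (∑ i ∈ Finset.range (d + 1), C (Δ ^ i * a (d - i) / a d) * X ^ (d - i)) = g' ^ k' := by
  set P : F[X] := ∑ i ∈ Finset.range (d + 1), C (a i) * X ^ (d - i) with hPdef
  set Q : F[X] := ∑ i ∈ Finset.range (d + 1), C (Δ ^ i * a (d - i) / a d) * X ^ (d - i)
    with hQdef
  have hknz : k ≠ 0 := by
    intro hk
    have h1 := sum_natDegree d hd a h0
    rw [← hPdef, hP, hk, pow_zero, natDegree_one] at h1
    omega
  have hb0 : Δ ^ 0 * a (d - 0) / a d = 1 := by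
    rw [pow_zero, one_mul, Nat.sub_zero, div_self had]
  have hQmonic : Q.Monic := sum_monic d hd _ hb0
  have hQfact : Q = C (Δ ^ d / a d) * ((reverse P).comp (C Δ⁻¹ * X)) := by
    rw [sum_reverse d hd a h0]
    have hcomp : (∑ i ∈ Finset.range (d + 1), C (a i) * X ^ i).comp (C Δ⁻¹ * X)
        = ∑ i ∈ Finset.range (d + 1), C (a i) * (C Δ⁻¹ * X) ^ i := by
      simp only [Polynomial.comp, eval₂_finset_sum, eval₂_mul, eval₂_C, eval₂_X_pow]
    rw [hcomp, Finset.mul_sum, hQdef]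
    have hre : ∀ j ∈ Finset.range (d + 1),
        C (Δ ^ j * a (d - j) / a d) * X ^ (d - j)
          = (fun m => C (Δ ^ (d - m) * a m / a d) * X ^ m) (d - j) := by
      intro j hj
      have hj' : j ≤ d := by have := Finset.mem_range.mp hj; omega
      simp only []
      rw [Nat.sub_sub_self hj']
    rw [Finset.sum_congr rfl hre]
    have := Finset.sum_range_reflect (fun m => C (Δ ^ (d - m) * a m / a d) * X ^ m) (d + 1)
    simp only [Nat.add_sub_cancel] at this
    rw [this]
    apply Finset.sum_congr rfl
    intro m hm
    have hm' : m ≤ d := by have := Finset.mem_range.mp hm; omega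
    rw [show ((C Δ⁻¹ * X : F[X]) ^ m) = C (Δ⁻¹ ^ m) * X ^ m by rw [mul_pow, ← C_pow]]
    rw [show C (a m) * (C (Δ⁻¹ ^ m) * X ^ m) = C (a m * Δ⁻¹ ^ m) * X ^ m by
      rw [← mul_assoc, ← C_mul]]
    rw [← mul_assoc, ← C_mul]
    have hsc : Δ ^ (d - m) * a m / a d = Δ ^ d / a d * (a m * Δ⁻¹ ^ m) := by
      rw [pow_sub₀ Δ hΔ hm', inv_pow]
      simp only [div_eq_mul_inv]
      ring
    rw [hsc]
  have hrev : P.reverse = g.reverse ^ k := by rw [hP, rev_pow]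
  have hg0 : g.coeff 0 ≠ 0 := by
    have h1 : P.coeff 0 = a d := sum_coeff_zero d hd a
    have h2 : (g.coeff 0) ^ k = a d := by
      rw [← h1, hP, coeff_zero_eq_eval_zero g, coeff_zero_eq_eval_zero (g ^ k), eval_pow]
    intro h
    rw [h, zero_pow hknz] at h2
    exact had h2.symm
  have hgrev : Irreducible g.reverse := irr_rev g hg hg0
  have hirr : Irreducible (g.reverse.comp (C Δ⁻¹ * X)) :=
    irr_comp_scale Δ⁻¹ (inv_ne_zero hΔ) _ hgrev
  set h : F[X] := g.reverse.comp (C Δ⁻¹ * X) with hh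
  have hQ2 : Q = C (Δ ^ d / a d) * h ^ k := by rw [hQfact, hrev, pow_comp]
  have hhne : h ≠ 0 := hirr.ne_zero
  set w : F := h.leadingCoeff with hwdef
  have hw : w ≠ 0 := leadingCoeff_ne_zero.mpr hhne
  refine ⟨C w⁻¹ * h, k,
    (irreducible_isUnit_mul (isUnit_C.mpr (isUnit_iff_ne_zero.mpr (inv_ne_zero hw)))).mpr hirr,
    ?_⟩
  have hmono : (C w⁻¹ * h).Monic := by
    rw [Monic, leadingCoeff_mul, leadingCoeff_C, ← hwdef, inv_mul_cancel₀ hw]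
  have hexp : Q = C (Δ ^ d / a d * w ^ k) * (C w⁻¹ * h) ^ k := by
    rw [hQ2, mul_pow, ← C_pow, ← mul_assoc, ← C_mul]
    congr 2
    field_simp
    rw [← mul_pow, one_div, mul_inv_cancel₀ hw, one_pow]
  have hone : Δ ^ d / a d * w ^ k = 1 := by
    have h3 := hQmonic
    rw [hexp, Monic, leadingCoeff_mul, leadingCoeff_C, Monic.leadingCoeff (hmono.pow k),
      mul_one] at h3
    exact h3
  rw [hexp, hone, C_1, one_mul]
def Tinvblk (d : ℕ) (Δ : F) : Matrix (Fin d) (Fin d) F :=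
  Matrix.of fun k i => if (k : ℕ) + (i : ℕ) = d - 1 then (Δ ^ (k : ℕ))⁻¹ else 0

lemma Tblk_mul_Tinv (d : ℕ) (Δ : F) (hΔ : Δ ≠ 0) : Tblk d Δ * Tinvblk d Δ = 1 := by
  ext i i'
  have hi := i.isLt
  have hi' := i'.isLt
  rw [Matrix.mul_apply]
  rw [Finset.sum_eq_single_of_mem (⟨d - 1 - (i : ℕ), by omega⟩ : Fin d) (Finset.mem_univ _) ?_]
  · have h1 : (i : ℕ) + (d - 1 - (i : ℕ)) = d - 1 := by omega
    by_cases h : i = i'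
    · subst h
      have h2 : (d - 1 - (i : ℕ)) + (i : ℕ) = d - 1 := by omega
      simp [Tblk, Tinvblk, h1, h2, Matrix.one_apply_eq, mul_inv_cancel₀ (pow_ne_zero _ hΔ)]
    · have h2 : ¬((d - 1 - (i : ℕ)) + (i' : ℕ) = d - 1) := by
        intro hc; apply h; apply Fin.ext; omega
      simp [Tblk, Tinvblk, h1, h2, Matrix.one_apply_ne h]
  · intro l _ hne
    have h1 : ¬((i : ℕ) + (l : ℕ) = d - 1) := by
      intro hc; apply hne; apply Fin.ext; simp; omega
    simp [Tblk, h1]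

lemma blockDiagonal'_smul_comm {o : Type*} [DecidableEq o] [Fintype o] {m' : o → Type*}
    [∀ j, Fintype (m' j)] (M : ∀ j, Matrix (m' j) (m' j) F) (Δ : F) :
    Matrix.blockDiagonal' (fun j => Δ • M j) = Δ • Matrix.blockDiagonal' M := by
  ext ⟨j, i⟩ ⟨j', i'⟩
  rw [Matrix.blockDiagonal'_apply]
  by_cases h : j = j'
  · subst h
    simp [Matrix.blockDiagonal'_apply]
  · simp [Matrix.blockDiagonal'_apply, h]

end Helpers

set_option maxHeartbeats 1000000 in
/-- Elementary divisors of the adjugate of a nonsingular matrix.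
The elementary divisors of `A` are encoded by the primary rational canonical form:
`A` is similar to the block diagonal matrix of the companion matrices of its elementary
divisors `p_j(λ) = λ^(d j) + a j 1 * λ^(d j − 1) + ⋯ + a j (d j)`, each of which is a
power of an irreducible polynomial.  If `A` is nonsingular (each `a j (d j) ≠ 0`), then
the elementary divisors of `Adj(A)` are
`q_j(λ) = λ^(d j) + Δ (a j (d j −1)/a j (d j)) λ^(d j −1) + ⋯ + Δ^(d j)/a j (d j)`
with `Δ = det A`; i.e. each `q_j` is a power of an irreducible polynomial and `Adj(A)` is
similar to the block diagonal matrix of the companion matrices of the `q_j`. -/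
theorem elementaryDivisors_adjugate
    {F : Type*} [Field F] (r : ℕ) (d : Fin r → ℕ) (hd : ∀ j, 0 < d j)
    (a : Fin r → ℕ → F) (hlead : ∀ j, a j 0 = 1) (hconst : ∀ j, a j (d j) ≠ 0)
    (hprime : ∀ j, ∃ (g : Polynomial F) (k : ℕ), Irreducible g ∧
      (∑ i ∈ Finset.range (d j + 1), Polynomial.C (a j i) * Polynomial.X ^ (d j - i)) = g ^ k)
    (A : Matrix ((j : Fin r) × Fin (d j)) ((j : Fin r) × Fin (d j)) F)
    (hA : IsUnit A.det)
    (S : Matrix ((j : Fin r) × Fin (d j)) ((j : Fin r) × Fin (d j)) F)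
    (hS : IsUnit S.det)
    (hsim : A * S = S * Matrix.blockDiagonal' fun j => companionMatrix (d j) (a j)) :
    (∀ j, ∃ (g : Polynomial F) (k : ℕ), Irreducible g ∧
      (∑ i ∈ Finset.range (d j + 1),
        Polynomial.C (A.det ^ i * a j (d j - i) / a j (d j)) * Polynomial.X ^ (d j - i)) =
        g ^ k) ∧
    ∃ T : Matrix ((j : Fin r) × Fin (d j)) ((j : Fin r) × Fin (d j)) F, IsUnit T.det ∧
      A.adjugate * T = T * Matrix.blockDiagonal' fun j =>
        companionMatrix (d j) (fun i => A.det ^ i * a j (d j - i) / a j (d j)) := by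
  have hΔ : A.det ≠ 0 := hA.ne_zero
  constructor
  · intro j
    obtain ⟨g, k, hg, hp⟩ := hprime j
    exact poly_main (d j) (hd j) (a j) (hlead j) (hconst j) A.det hΔ g k hg hp
  · refine ⟨S * Matrix.blockDiagonal' (fun j => Tblk (d j) A.det), ?_, ?_⟩
    · rw [Matrix.det_mul]
      refine hS.mul (Matrix.isUnit_det_of_right_inverse
        (B := Matrix.blockDiagonal' (fun j => Tinvblk (d j) A.det)) ?_)
      rw [← Matrix.blockDiagonal'_mul]
      rw [show (fun k => Tblk (d k) A.det * Tinvblk (d k) A.det)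
          = (fun k : Fin r => (1 : Matrix (Fin (d k)) (Fin (d k)) F)) from
        funext fun k => Tblk_mul_Tinv (d k) A.det hΔ]
      exact Matrix.blockDiagonal'_one
    · have hAunit : IsUnit A := (Matrix.isUnit_iff_isUnit_det A).mpr hA
      apply hAunit.mul_left_cancel
      rw [← mul_assoc, Matrix.mul_adjugate, Matrix.smul_mul, Matrix.one_mul]
      rw [← mul_assoc, ← mul_assoc, hsim]
      rw [mul_assoc, mul_assoc]
      rw [← Matrix.blockDiagonal'_mul, ← Matrix.blockDiagonal'_mul]
      rw [show (fun k => companionMatrix (d k) (a k) * (Tblk (d k) A.det *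
            companionMatrix (d k) fun i => A.det ^ i * a k (d k - i) / a k (d k)))
          = fun k => A.det • Tblk (d k) A.det from
        funext fun k => key_block (d k) (hd k) (a k) (hlead k) (hconst k) A.det]
      rw [blockDiagonal'_smul_comm, Matrix.mul_smul]
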